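/- arXiv:2311.11218 — 7 statements merged into one kernel-verified Lean document; each statement's English description precedes it below -/
import Mathlib

section
/- The system of linear equations over Z_2 given by g(XI)+g(IX)+g(XX)=0, g(IZ)+g(ZI)+g(ZZ)=0, g(XZ)+g(ZX)+g(YY)=0, g(XI)+g(IZ)+g(XZ)=0, g(IX)+g(ZI)+g(ZX)=0, g(XX)+g(ZZ)+g(YY)=1 has no solution g: {XI,IX,XX,IZ,ZI,ZZ,XZ,ZX,YY} → Z_2. -/
/-- The nine observables of Mermin's square, as labels. -/
inductive MerminObs : Type
  | XI | IX | XX | IZ | ZI | ZZ | XZ | ZX | YY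
  deriving DecidableEq

open MerminObs

/-- The system of `ZMod 2`-linear equations corresponding to the rows and columns of
Mermin's square has no solution. -/
theorem mermin_square_inconsistent :
    ¬ ∃ g : MerminObs → ZMod 2,
      g XI + g IX + g XX = 0 ∧
      g IZ + g ZI + g ZZ = 0 ∧
      g XZ + g ZX + g YY = 0 ∧
      g XI + g IZ + g XZ = 0 ∧
      g IX + g ZI + g ZX = 0 ∧
      g XX + g ZZ + g YY = 1 := by
  rintro ⟨g, h1, h2, h3, h4, h5, h6⟩
  have : (0:ZMod 2) = 1 := by
    have c : (2:ZMod 2) = 0 := by decide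
    linear_combination h1 + h2 + h3 + h4 + h5 + h6 - (g XI + g IX + g XX + g IZ + g ZI + g ZZ + g XZ + g ZX + g YY) * c
  exact absurd this (by decide)
end

section
/- If a measurement scenario's empirical model e has a global distribution d ∈ D_R(E(X)) (i.e., a distribution on global assignments whose marginal to each context C equals e_C), then e has a realization by a factorisable hidden-variable model: there exist a set Λ, a distribution h_Λ on Λ, and for each λ and context C a distribution h_C^λ on E(C) which factors as a product of its single-measurement marginals, such that e_C(s) = Σ_λ h_C^λ(s)·h_Λ(λ) for all C and s. -/
open Finset

variable {X O : Type}

/-- Restriction of an assignment on a context `C` to a sub-context `U ⊆ C`. -/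
def res {U C : Finset X} (h : U ⊆ C) (s : ↥C → O) : ↥U → O :=
  fun x => s ⟨x.1, h x.2⟩

/-- Restriction of a global assignment to a context `C`. -/
def resX (C : Finset X) (s : X → O) : ↥C → O := fun x => s x.1

/-- Marginalization of a distribution on `E(C)` to a sub-context `U ⊆ C`. -/
noncomputable def marg [DecidableEq X] [Fintype O] [DecidableEq O]
    {U C : Finset X} (h : U ⊆ C) (d : (↥C → O) → NNReal) : (↥U → O) → NNReal :=
  fun s => ∑ s' ∈ univ.filter (fun s' : ↥C → O => res h s' = s), d s'

/-- Marginalization of a global distribution to a context `C`. -/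
noncomputable def margX [Fintype X] [DecidableEq X] [Fintype O] [DecidableEq O]
    (C : Finset X) (d : (X → O) → NNReal) : (↥C → O) → NNReal :=
  fun s => ∑ s' ∈ univ.filter (fun s' : X → O => resX C s' = s), d s'

/-- Single-measurement marginal of a distribution on `E(C)` at `m ∈ C`. -/
noncomputable def margPt [DecidableEq X] [Fintype O] [DecidableEq O]
    {C : Finset X} (m : ↥C) (d : (↥C → O) → NNReal) : O → NNReal :=
  fun o => ∑ s' ∈ univ.filter (fun s' : ↥C → O => s' m = o), d s'

/-- Marginalizing a point mass gives a point mass. -/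
lemma marg_delta [DecidableEq X] [Fintype O] [DecidableEq O]
    {U C : Finset X} (h : U ⊆ C) (t : ↥C → O) (s : ↥U → O) :
    marg h (fun s' => if s' = t then 1 else 0) s
      = if res h t = s then 1 else 0 := by
  classical
  unfold marg
  rw [Finset.sum_ite_eq' (univ.filter (fun s' : ↥C → O => res h s' = s)) t (fun _ => 1)]
  simp

lemma margPt_delta [DecidableEq X] [Fintype O] [DecidableEq O]
    {C : Finset X} (m : ↥C) (t : ↥C → O) (o : O) :
    margPt m (fun s' => if s' = t then 1 else 0) o = if t m = o then 1 else 0 := by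
  classical
  unfold margPt
  rw [Finset.sum_ite_eq' (univ.filter (fun s' : ↥C → O => s' m = o)) t (fun _ => 1)]
  simp

/-- If an empirical model `e` has a global distribution, then it is realized by a
factorisable hidden-variable model. -/
theorem global_distribution_gives_factorisable_hv_model
    [Fintype X] [DecidableEq X] [Fintype O] [DecidableEq O]
    (M : Finset (Finset X))
    (e : (C : Finset X) → (↥C → O) → NNReal)
    (d : (X → O) → NNReal)
    (hd1 : ∑ s : X → O, d s = 1)
    (hdm : ∀ C ∈ M, margX C d = e C) :
    ∃ (k : ℕ) (hΛ : Fin k → NNReal)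
      (h : Fin k → (C : Finset X) → (↥C → O) → NNReal),
      (∑ l, hΛ l = 1) ∧
      (∀ l, ∀ C ∈ M, ∑ s : ↥C → O, h l C s = 1) ∧
      (∀ l, ∀ C ∈ M, ∀ C' ∈ M,
        marg (inter_subset_left (s₁ := C) (s₂ := C')) (h l C) =
          marg (inter_subset_right (s₁ := C) (s₂ := C')) (h l C')) ∧
      (∀ l, ∀ C ∈ M, ∀ s : ↥C → O, h l C s = ∏ m : ↥C, margPt m (h l C) (s m)) ∧
      (∀ C ∈ M, ∀ s : ↥C → O, e C s = ∑ l, h l C s * hΛ l) := by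
  classical
  set g := (Fintype.equivFin (X → O)).symm with hg
  refine ⟨Fintype.card (X → O), fun l => d (g l),
    fun l C s => if s = resX C (g l) then 1 else 0, ?_, ?_, ?_, ?_, ?_⟩
  · rw [← hd1]
    exact Equiv.sum_comp g d
  · intro l C _
    simp
  · intro l C _ C' _
    funext s
    rw [marg_delta, marg_delta]
    have : res (inter_subset_left (s₁ := C) (s₂ := C')) (resX C (g l))
        = res (inter_subset_right (s₁ := C) (s₂ := C')) (resX C' (g l)) := by
      funext x; rfl
    rw [this]
  · intro l C _ s
    dsimp only
    by_cases hs : s = resX C (g l)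
    · subst hs
      rw [if_pos rfl]
      symm
      apply Finset.prod_eq_one
      intro m _
      rw [margPt_delta, if_pos rfl]
    · rw [if_neg hs]
      have : ∃ m : ↥C, s m ≠ resX C (g l) m := by
        by_contra hcon
        push_neg at hcon
        exact hs (funext hcon)
      obtain ⟨m, hm⟩ := this
      symm
      apply Finset.prod_eq_zero (Finset.mem_univ m)
      rw [margPt_delta, if_neg (fun hh => hm hh.symm)]
  · intro C hC s
    rw [← hdm C hC]
    unfold margX
    rw [Finset.sum_filter, ← Equiv.sum_comp g (fun s' => if resX C s' = s then d s' else 0)]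
    apply Finset.sum_congr rfl
    intro l _
    dsimp only
    by_cases hls : resX C (g l) = s
    · rw [if_pos hls, if_pos hls.symm, one_mul]
    · rw [if_neg hls, if_neg (fun hh => hls hh.symm), zero_mul]
end

section
/- The PR-box empirical model has no global probability distribution: there is no distribution d on {0,1}^{a1,a2,b1,b2} such that the marginal of d to each of the four contexts {a1,b1}, {a1,b2}, {a2,b1}, {a2,b2} equals the PR-box distribution (which assigns probability 1/2 to equal outcomes in the first three contexts and probability 1/2 to unequal outcomes in the context {a2,b2}). -/
open Finset

/-- The four measurements of the (2,2,2) Bell-type scenario. -/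
inductive Meas : Type
  | a1 | a2 | b1 | b2
  deriving DecidableEq

instance : Fintype Meas :=
  ⟨{Meas.a1, Meas.a2, Meas.b1, Meas.b2}, by intro x; cases x <;> simp⟩

open Meas

/-- The PR box has no global probability distribution. -/
theorem pr_box_has_no_global_distribution :
    ¬ ∃ d : (Meas → Fin 2) → NNReal,
      (∑ g : Meas → Fin 2, d g = 1) ∧
      (∀ o1 o2 : Fin 2,
        (∑ g ∈ univ.filter (fun g : Meas → Fin 2 => g a1 = o1 ∧ g b1 = o2), d g) =
          if o1 = o2 then 1/2 else 0) ∧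
      (∀ o1 o2 : Fin 2,
        (∑ g ∈ univ.filter (fun g : Meas → Fin 2 => g a1 = o1 ∧ g b2 = o2), d g) =
          if o1 = o2 then 1/2 else 0) ∧
      (∀ o1 o2 : Fin 2,
        (∑ g ∈ univ.filter (fun g : Meas → Fin 2 => g a2 = o1 ∧ g b1 = o2), d g) =
          if o1 = o2 then 1/2 else 0) ∧
      (∀ o1 o2 : Fin 2,
        (∑ g ∈ univ.filter (fun g : Meas → Fin 2 => g a2 = o1 ∧ g b2 = o2), d g) =
          if o1 ≠ o2 then 1/2 else 0) := by

  rintro ⟨d, hsum, h1, h2, h3, h4⟩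
  have key : ∀ g : Meas → Fin 2, d g = 0 := by
    intro g
    by_cases e1 : g a1 = g b1
    · by_cases e2 : g a1 = g b2
      · by_cases e3 : g a2 = g b1
        · have e4 : g a2 = g b2 := by rw [e3, ← e1, e2]
          have hs := h4 (g a2) (g b2)
          rw [if_neg (by simp [e4])] at hs
          exact (Finset.sum_eq_zero_iff.mp hs) g
            (Finset.mem_filter.mpr ⟨Finset.mem_univ _, rfl, rfl⟩)
        · have hs := h3 (g a2) (g b1)
          rw [if_neg e3] at hs
          exact (Finset.sum_eq_zero_iff.mp hs) g
            (Finset.mem_filter.mpr ⟨Finset.mem_univ _, rfl, rfl⟩)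
      · have hs := h2 (g a1) (g b2)
        rw [if_neg e2] at hs
        exact (Finset.sum_eq_zero_iff.mp hs) g
          (Finset.mem_filter.mpr ⟨Finset.mem_univ _, rfl, rfl⟩)
    · have hs := h1 (g a1) (g b1)
      rw [if_neg e1] at hs
      exact (Finset.sum_eq_zero_iff.mp hs) g
        (Finset.mem_filter.mpr ⟨Finset.mem_univ _, rfl, rfl⟩)
  rw [Finset.sum_eq_zero (fun g _ => key g)] at hsum
  exact zero_ne_one hsum
end

section
/- If an empirical model e is strongly contextual (the set of global assignments g with g|_C in the support of e_C for all contexts C is empty), then its noncontextual fraction is 0: in any convex decomposition e = λ·e^{NC} + (1−λ)·e' with e^{NC} noncontextual (i.e., arising as marginals of a global distribution), λ = 0. -/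
open Finset

variable {X O : Type}

/-- If an empirical model `e` is strongly contextual, then in any convex decomposition
`e = λ·e^NC + (1-λ)·e'` with `e^NC` noncontextual, `λ = 0` (so the noncontextual
fraction of `e` is `0`). -/
theorem strongly_contextual_implies_ncf_zero
    [Fintype X] [DecidableEq X] [Fintype O] [DecidableEq O]
    (M : Finset (Finset X))
    (e eNC e' : (C : Finset X) → (↥C → O) → NNReal)
    (hSC : ¬ ∃ g : X → O, ∀ C ∈ M, 0 < e C (resX C g))
    (lam : NNReal) (hlam : lam ≤ 1)
    (hNC : ∃ d : (X → O) → NNReal, (∑ s : X → O, d s = 1) ∧ ∀ C ∈ M, margX C d = eNC C)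
    (he'1 : ∀ C ∈ M, ∑ s : ↥C → O, e' C s = 1)
    (hdecomp : ∀ C ∈ M, ∀ s : ↥C → O, e C s = lam * eNC C s + (1 - lam) * e' C s) :
    lam = 0 := by
  by_contra hlam0
  obtain ⟨d, hd1, hdm⟩ := hNC
  have hpos : 0 < lam := pos_iff_ne_zero.mpr hlam0
  -- find g with d g > 0
  have : ∃ g : X → O, 0 < d g := by
    by_contra h
    push_neg at h
    have : (∑ s : X → O, d s) = 0 := Finset.sum_eq_zero (fun s _ => le_antisymm (h s) (zero_le))
    rw [hd1] at this
    exact one_ne_zero this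
  obtain ⟨g, hg⟩ := this
  apply hSC
  refine ⟨g, fun C hC => ?_⟩
  have hle : d g ≤ eNC C (resX C g) := by
    rw [← hdm C hC]
    unfold margX
    exact Finset.single_le_sum (fun s _ => zero_le)
      (Finset.mem_filter.mpr ⟨Finset.mem_univ _, rfl⟩)
  have hNCpos : 0 < eNC C (resX C g) := lt_of_lt_of_le hg hle
  have := hdecomp C hC (resX C g)
  rw [this]
  exact lt_of_lt_of_le (mul_pos hpos hNCpos) (le_add_of_nonneg_right (zero_le))
end

section
/- If an empirical model e is not strongly contextual, i.e., there exists a global assignment s with e_C(s|_C) > 0 for all contexts C, then the noncontextual fraction of e is positive: there exist λ > 0, a noncontextual model e^{NC}, and an empirical model e' with e = λ·e^{NC} + (1−λ)·e'. -/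
open Finset

variable {X O : Type}

lemma marg_indicator [DecidableEq X] [Fintype O] [DecidableEq O]
    {U C : Finset X} (h : U ⊆ C) (a : ↥C → O) (c : NNReal) :
    marg h (fun s => if s = a then c else 0) = fun u => if u = res h a then c else 0 := by
  funext u
  unfold marg
  rw [Finset.sum_ite_eq' (univ.filter fun s' : ↥C → O => res h s' = u) a (fun _ => c)]
  simp [Finset.mem_filter, eq_comm]

lemma margX_indicator [Fintype X] [DecidableEq X] [Fintype O] [DecidableEq O]
    (C : Finset X) (g : X → O) (c : NNReal) :
    margX C (fun s => if s = g then c else 0) = fun u => if u = resX C g then c else 0 := by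
  funext u
  unfold margX
  rw [Finset.sum_ite_eq' (univ.filter fun s' : X → O => resX C s' = u) g (fun _ => c)]
  simp [Finset.mem_filter, eq_comm]

set_option maxHeartbeats 1000000 in
/-- If an empirical model `e` is not strongly contextual — there is a global assignment
whose restriction has positive probability in every context — then its noncontextual
fraction is positive: `e` admits a convex decomposition `e = λ·e^NC + (1-λ)·e'` with
`λ > 0`, `e^NC` noncontextual, and `e'` an empirical model. -/
theorem not_strongly_contextual_implies_ncf_pos
    [Fintype X] [DecidableEq X] [Fintype O] [DecidableEq O]
    (M : Finset (Finset X))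
    (e : (C : Finset X) → (↥C → O) → NNReal)
    (he1 : ∀ C ∈ M, ∑ s : ↥C → O, e C s = 1)
    (hec : ∀ C ∈ M, ∀ C' ∈ M,
      marg (inter_subset_left (s₁ := C) (s₂ := C')) (e C) =
        marg (inter_subset_right (s₁ := C) (s₂ := C')) (e C'))
    (hs : ∃ g : X → O, ∀ C ∈ M, 0 < e C (resX C g)) :
    ∃ lam : NNReal, 0 < lam ∧ lam ≤ 1 ∧
      ∃ eNC e' : (C : Finset X) → (↥C → O) → NNReal,
        (∃ d : (X → O) → NNReal, (∑ s : X → O, d s = 1) ∧ ∀ C ∈ M, margX C d = eNC C) ∧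
        (∀ C ∈ M, ∑ s : ↥C → O, e' C s = 1) ∧
        (∀ C ∈ M, ∀ C' ∈ M,
          marg (inter_subset_left (s₁ := C) (s₂ := C')) (e' C) =
            marg (inter_subset_right (s₁ := C) (s₂ := C')) (e' C')) ∧
        (∀ C ∈ M, ∀ s : ↥C → O, e C s = lam * eNC C s + (1 - lam) * e' C s) := by
  classical
  obtain ⟨g, hg⟩ := hs
  set δ : (X → O) → NNReal := fun s => if s = g then 1 else 0 with hδ
  have hδsum : ∑ s : X → O, δ s = 1 := by simp [hδ]
  set eNC : (C : Finset X) → (↥C → O) → NNReal :=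
    fun C t => if t = resX C g then 1 else 0 with heNC
  have hmargX : ∀ C : Finset X, margX C δ = eNC C := fun C => margX_indicator C g 1
  have heNCsum : ∀ C : Finset X, ∑ s : ↥C → O, eNC C s = 1 := by
    intro C; simp [heNC]
  by_cases hM : M.Nonempty
  · set lam := M.inf' hM (fun C => e C (resX C g)) with hlam
    have hlam_pos : 0 < lam := by
      rw [hlam, Finset.lt_inf'_iff]; exact hg
    have hlam_le : ∀ C ∈ M, lam ≤ e C (resX C g) := fun C hC => Finset.inf'_le _ hC
    have hle1 : ∀ C ∈ M, ∀ s : ↥C → O, e C s ≤ 1 := by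
      intro C hC s
      rw [← he1 C hC]
      exact Finset.single_le_sum (fun _ _ => zero_le) (Finset.mem_univ s)
    obtain ⟨C0, hC0⟩ := hM
    have hlam1 : lam ≤ 1 := le_trans (hlam_le C0 hC0) (hle1 C0 hC0 _)
    have hkey : ∀ C ∈ M, ∀ s : ↥C → O, lam * eNC C s ≤ e C s := by
      intro C hC s
      by_cases hsg : s = resX C g
      · subst hsg
        simpa [heNC] using hlam_le C hC
      · simp [heNC, hsg]
    by_cases h1 : lam = 1
    · refine ⟨lam, hlam_pos, hlam1, eNC, e, ⟨δ, hδsum, fun C _ => hmargX C⟩, he1, hec, ?_⟩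
      intro C hC s
      have hr : e C (resX C g) = 1 := le_antisymm (hle1 C hC _) (h1 ▸ hlam_le C hC)
      have hsplit := Finset.add_sum_erase univ (e C) (Finset.mem_univ (resX C g))
      rw [he1 C hC, hr] at hsplit
      have hz0 : ∑ t ∈ univ.erase (resX C g), e C t = 0 := add_eq_left.mp hsplit
      rw [h1]
      simp only [one_mul, tsub_self, zero_mul, add_zero]
      by_cases hsg : s = resX C g
      · subst hsg; rw [hr]; simp [heNC]
      · have : e C s = 0 :=
          Finset.sum_eq_zero_iff.mp hz0 s (Finset.mem_erase.mpr ⟨hsg, Finset.mem_univ s⟩)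
        rw [this]; simp [heNC, hsg]
    · have hne : (1 : NNReal) - lam ≠ 0 := by
        intro h0
        exact h1 (le_antisymm hlam1 (tsub_eq_zero_iff_le.mp h0))
      set e' : (C : Finset X) → (↥C → O) → NNReal :=
        fun C s => (e C s - lam * eNC C s) / (1 - lam) with he'
      have hdec : ∀ C ∈ M, ∀ s : ↥C → O, e C s = lam * eNC C s + (1 - lam) * e' C s := by
        intro C hC s
        have h4 : (e C s - lam * eNC C s) / (1 - lam) * (1 - lam)
            = e C s - lam * eNC C s := div_mul_cancel₀ _ hne
        calc e C s = lam * eNC C s + (e C s - lam * eNC C s) :=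
              (add_tsub_cancel_of_le (hkey C hC s)).symm
          _ = lam * eNC C s + (1 - lam) * e' C s := by
              rw [he']; rw [mul_comm (1 - lam)]; rw [h4]
      have hsum' : ∀ C ∈ M, ∑ s : ↥C → O, e' C s = 1 := by
        intro C hC
        have h2 : ∑ s : ↥C → O, e C s
            = lam * (∑ s : ↥C → O, eNC C s) + (1 - lam) * ∑ s : ↥C → O, e' C s := by
          rw [Finset.mul_sum, Finset.mul_sum, ← Finset.sum_add_distrib]
          exact Finset.sum_congr rfl (fun s _ => hdec C hC s)
        rw [he1 C hC, heNCsum C, mul_one] at h2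
        have h3 : (1 - lam) * ∑ s : ↥C → O, e' C s = 1 - lam :=
          eq_tsub_of_add_eq (by rw [add_comm]; exact h2.symm)
        exact mul_left_cancel₀ hne (by rw [h3, mul_one])
      have hmargdec : ∀ (D : Finset X), D ∈ M →
          ∀ {U : Finset X} (h : U ⊆ D) (u : ↥U → O),
          marg h (e D) u = lam * marg h (eNC D) u + (1 - lam) * marg h (e' D) u := by
        intro D hD U h u
        unfold marg
        rw [Finset.mul_sum, Finset.mul_sum, ← Finset.sum_add_distrib]
        exact Finset.sum_congr rfl (fun s _ => hdec D hD s)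
      have hcomp : ∀ C ∈ M, ∀ C' ∈ M,
          marg (inter_subset_left (s₁ := C) (s₂ := C')) (e' C) =
            marg (inter_subset_right (s₁ := C) (s₂ := C')) (e' C') := by
        intro C hC C' hC'
        funext u
        have ha := hmargdec C hC (inter_subset_left (s₁ := C) (s₂ := C')) u
        have hb := hmargdec C' hC' (inter_subset_right (s₁ := C) (s₂ := C')) u
        have hNC : marg (inter_subset_left (s₁ := C) (s₂ := C')) (eNC C) u =
            marg (inter_subset_right (s₁ := C) (s₂ := C')) (eNC C') u := by
          rw [show eNC C = fun s => if s = resX C g then (1 : NNReal) else 0 from rfl,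
            show eNC C' = fun s => if s = resX C' g then (1 : NNReal) else 0 from rfl,
            marg_indicator, marg_indicator]
          rfl
        rw [congrFun (hec C hC C' hC') u, hb, hNC] at ha
        exact mul_left_cancel₀ hne (add_left_cancel ha).symm
      exact ⟨lam, hlam_pos, hlam1, eNC, e', ⟨δ, hδsum, fun C _ => hmargX C⟩,
        hsum', hcomp, hdec⟩
  · refine ⟨1, one_pos, le_refl 1, eNC, e, ⟨δ, hδsum, fun C _ => hmargX C⟩, he1, hec, ?_⟩
    intro C hC
    exact absurd ⟨C, hC⟩ hM
end

section
/- Let ρ be a density matrix and A1,...,Ak pairwise commuting self-adjoint involutions (A_i² = I) with A1·A2·...·Ak = (−1)^a·I. If λ1,...,λk ∈ {±1} are joint eigenvalues with nonzero probability under sequential projective measurement of A1,...,Ak on ρ (i.e., P := Π_i P_{λ_i} satisfies Tr(PρP) ≠ 0, where P_{λ_i} = (I + λ_i A_i)/2), then Π_i λ_i = (−1)^a. -/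
open Finset
open scoped ComplexOrder

/-- If `ρ` is a density matrix and `A 0, …, A (k-1)` are pairwise commuting self-adjoint
involutions with product `(-1)^a • I`, then any tuple of joint eigenvalues
`λ i ∈ {±1}` that occurs with nonzero probability under sequential projective
measurement (`P = Π (I + λ i • A i)/2`, `Tr(PρP) ≠ 0`) satisfies `Π λ i = (-1)^a`. -/
theorem joint_eigenvalues_satisfy_product_constraint
    {d k : ℕ} (ρ : Matrix (Fin d) (Fin d) ℂ)
    (hρ : ρ.PosSemidef) (hρtr : ρ.trace = 1)
    (A : Fin k → Matrix (Fin d) (Fin d) ℂ)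
    (hherm : ∀ i, (A i).IsHermitian)
    (hinv : ∀ i, A i * A i = 1)
    (hcomm : ∀ i j, Commute (A i) (A j))
    (a : ℕ)
    (hprod : ((List.finRange k).map A).prod = ((-1 : ℂ) ^ a) • (1 : Matrix (Fin d) (Fin d) ℂ))
    (lam : Fin k → ℂ) (hlam : ∀ i, lam i = 1 ∨ lam i = -1)
    (P : Matrix (Fin d) (Fin d) ℂ)
    (hP : P = ((List.finRange k).map
      (fun i => ((1 : ℂ) / 2) • ((1 : Matrix (Fin d) (Fin d) ℂ) + lam i • A i))).prod)
    (hne : (P * ρ * P).trace ≠ 0) :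
    ∏ i, lam i = (-1 : ℂ) ^ a := by
  have hlam2 : ∀ i, lam i * lam i = 1 := by
    intro i; rcases hlam i with h | h <;> simp [h]
  set Q : Fin k → Matrix (Fin d) (Fin d) ℂ :=
    fun i => ((1 : ℂ) / 2) • ((1 : Matrix (Fin d) (Fin d) ℂ) + lam i • A i) with hQ
  have hAQ : ∀ i, A i * Q i = lam i • Q i := by
    intro i
    simp only [hQ, Matrix.mul_smul, mul_add, mul_one, Matrix.mul_smul, hinv i,
      smul_add, smul_smul, hlam2 i, one_smul]
    rw [show (lam i * (1 / 2 * lam i) : ℂ) = 1 / 2 from by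
        linear_combination (1 / 2 : ℂ) * hlam2 i,
      mul_comm (lam i) ((1 : ℂ) / 2)]
    exact add_comm _ _
  have hcommQ : ∀ i j, Commute (A i) (Q j) := by
    intro i j
    exact (((Commute.one_right (A i)).add_right ((hcomm i j).smul_right _)).smul_right _)
  have key : ∀ l : List (Fin k),
      (l.map A).prod * (l.map Q).prod = (l.map lam).prod • (l.map Q).prod := by
    intro l
    induction l with
    | nil => simp
    | cons i t ih =>
      simp only [List.map_cons, List.prod_cons]
      have hc : Commute ((t.map A).prod) (Q i) := by
        apply Commute.list_prod_left
        intro x hx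
        obtain ⟨j, hj, rfl⟩ := List.mem_map.mp hx
        exact hcommQ j i
      have h1 : (t.map A).prod * (Q i * (t.map Q).prod)
          = Q i * ((t.map A).prod * (t.map Q).prod) := by
        rw [← mul_assoc, hc.eq, mul_assoc]
      rw [mul_assoc, h1, ih, ← mul_assoc, hAQ i]
      simp [Matrix.smul_mul, Matrix.mul_smul, smul_smul, mul_assoc, mul_comm]
  have hkey := key (List.finRange k)
  rw [← hP, hprod, Matrix.smul_mul, one_mul] at hkey
  have hL : ((List.finRange k).map lam).prod = ∏ i, lam i := by
    rw [Fin.prod_univ_def]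
  rw [hL] at hkey
  by_contra h
  have hP0 : P = 0 := by
    have : ((-1 : ℂ) ^ a - ∏ i, lam i) • P = 0 := by
      rw [sub_smul, hkey, sub_self]
    rcases smul_eq_zero.mp this with h' | h'
    · exact absurd (sub_eq_zero.mp h').symm h
    · exact h'
  apply hne
  simp [hP0]
end

section
/- If a set X of Pauli operators admits determining trees τ_x for x and τ'_{−x} for −x over X with equal determining sets D(τ_x) = D(τ'_{−x}), then no global assignment g: X̄ → Z_2 on the partial closure X̄ of X can be consistent with all commuting-product relations in X̄ (i.e., X is state-independently AvN in a partial closure). -/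
open Finset
open scoped Classical

/-- The 2×2 Pauli matrices. -/
def sigmaX : Matrix (Fin 2) (Fin 2) ℂ := !![0, 1; 1, 0]
def sigmaY : Matrix (Fin 2) (Fin 2) ℂ := !![0, -Complex.I; Complex.I, 0]
def sigmaZ : Matrix (Fin 2) (Fin 2) ℂ := !![1, 0; 0, -1]

/-- The space of `n`-qubit operators. -/
abbrev PMat (n : ℕ) := Matrix (Fin n → Fin 2) (Fin n → Fin 2) ℂ

/-- The `n`-fold tensor (Kronecker) product of 2×2 matrices. -/
def tensorFold {n : ℕ} (f : Fin n → Matrix (Fin 2) (Fin 2) ℂ) : PMat n :=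
  Matrix.of fun p q => ∏ i, f i (p i) (q i)

/-- Membership in the Pauli `n`-group. -/
def IsPauli {n : ℕ} (P : PMat n) : Prop :=
  ∃ (c : ℂ) (f : Fin n → Matrix (Fin 2) (Fin 2) ℂ),
    (c = 1 ∨ c = -1 ∨ c = Complex.I ∨ c = -Complex.I) ∧
    (∀ i, f i = 1 ∨ f i = sigmaX ∨ f i = sigmaY ∨ f i = sigmaZ) ∧
    P = c • tensorFold f

/-- Membership in the partial closure `X̄` of `X`: the smallest set containing `X`
and the identity and closed under products of commuting elements. -/
inductive PC {n : ℕ} (X : Set (PMat n)) : PMat n → Prop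
  | base {x : PMat n} : x ∈ X → PC X x
  | one : PC X 1
  | mul {x y : PMat n} : PC X x → PC X y → Commute x y → PC X (x * y)

/-- `DTree X x L` : there is a determining tree for `x` over `X` with multiset of
leaves `L`. The children of every node pairwise commute and multiply to their
parent, and the leaves lie in `X`. -/
inductive DTree {n : ℕ} (X : Set (PMat n)) : PMat n → Multiset (PMat n) → Prop
  | leaf {x : PMat n} (hx : x ∈ X) : DTree X x {x}
  | node (cs : List (PMat n × Multiset (PMat n)))
      (hc : ∀ p ∈ cs, DTree X p.1 p.2)
      (hcomm : ∀ p ∈ cs, ∀ q ∈ cs, Commute p.1 q.1) :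
      DTree X ((cs.map Prod.fst).prod) ((cs.map Prod.snd).sum)

/-- `g` is a global assignment on the partial closure of `X` consistent with all
commuting-product relations: whenever pairwise-commuting elements of `X̄` have
product `(-1)^a • I`, the sum of their values is `a` mod 2. -/
def ConsistentAssignment {n : ℕ} (X : Set (PMat n)) (g : PMat n → ZMod 2) : Prop :=
  ∀ (l : List (PMat n)) (a : ℕ),
    (∀ y ∈ l, PC X y) → (∀ y ∈ l, ∀ z ∈ l, Commute y z) →
    l.prod = (-1 : PMat n) ^ a → (l.map g).sum = (a : ZMod 2)

lemma sigmaX_sq : sigmaX * sigmaX = 1 := by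
  simp [sigmaX, Matrix.mul_fin_two, Matrix.one_fin_two]

lemma sigmaY_sq : sigmaY * sigmaY = 1 := by
  simp [sigmaY, Matrix.mul_fin_two, Matrix.one_fin_two, Complex.I_mul_I]

lemma sigmaZ_sq : sigmaZ * sigmaZ = 1 := by
  simp [sigmaZ, Matrix.mul_fin_two, Matrix.one_fin_two]

lemma tensorFold_mul {n : ℕ} (f g : Fin n → Matrix (Fin 2) (Fin 2) ℂ) :
    tensorFold f * tensorFold g = tensorFold (fun i => f i * g i) := by
  ext p q
  simp only [tensorFold, Matrix.mul_apply, Matrix.of_apply]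
  rw [Fintype.prod_sum (fun i j => f i (p i) j * g i j (q i))]
  congr 1; ext r; rw [← Finset.prod_mul_distrib]

lemma tensorFold_one {n : ℕ} :
    tensorFold (fun _ : Fin n => (1 : Matrix (Fin 2) (Fin 2) ℂ)) = 1 := by
  ext p q
  simp only [tensorFold, Matrix.of_apply, Matrix.one_apply]
  by_cases h : p = q
  · subst h; simp
  · rw [if_neg h]
    obtain ⟨i, hi⟩ : ∃ i, p i ≠ q i := by
      by_contra hc; push_neg at hc; exact h (funext hc)
    exact Finset.prod_eq_zero (Finset.mem_univ i) (by simp [Matrix.one_apply, hi])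

lemma pauli_sq {n : ℕ} {P : PMat n} (h : IsPauli P) : P * P = 1 ∨ P * P = -1 := by
  obtain ⟨c, f, hc, hf, rfl⟩ := h
  have hff : ∀ i, f i * f i = 1 := by
    intro i
    rcases hf i with h | h | h | h <;> rw [h]
    · simp
    · exact sigmaX_sq
    · exact sigmaY_sq
    · exact sigmaZ_sq
  have hT : tensorFold f * tensorFold f = 1 := by
    rw [tensorFold_mul]
    simpa [hff] using tensorFold_one (n := n)
  have key : (c • tensorFold f) * (c • tensorFold f) = (c * c) • (1 : PMat n) := by
    rw [Matrix.smul_mul, Matrix.mul_smul, hT, smul_smul]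
  rw [key]
  rcases hc with rfl | rfl | rfl | rfl
  · left; simp
  · left; simp
  · right; simp [Complex.I_mul_I]
  · right; simp [Complex.I_mul_I]

lemma pc_list_prod {n : ℕ} {X : Set (PMat n)} :
    ∀ (l : List (PMat n)), (∀ y ∈ l, PC X y) →
      (∀ y ∈ l, ∀ z ∈ l, Commute y z) → PC X l.prod := by
  intro l
  induction l with
  | nil => intro _ _; simpa using PC.one
  | cons h t ih =>
      intro hpc hcomm
      rw [List.prod_cons]
      refine PC.mul (hpc h (by simp)) (ih (fun y hy => hpc y (by simp [hy]))
        (fun y hy z hz => hcomm y (by simp [hy]) z (by simp [hz]))) ?_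
      exact Commute.list_prod_right _ _ (fun z hz => hcomm h (by simp) z (by simp [hz]))

lemma sq_list_prod {n : ℕ} :
    ∀ (l : List (PMat n)), (∀ y ∈ l, y * y = 1 ∨ y * y = -1) →
      (∀ y ∈ l, ∀ z ∈ l, Commute y z) →
      l.prod * l.prod = 1 ∨ l.prod * l.prod = -1 := by
  intro l
  induction l with
  | nil => intro _ _; left; simp
  | cons h t ih =>
      intro hsq hcomm
      have hct : Commute h t.prod :=
        Commute.list_prod_right _ _ (fun z hz => hcomm h (by simp) z (by simp [hz]))
      rw [List.prod_cons]
      have : h * t.prod * (h * t.prod) = (h * h) * (t.prod * t.prod) := by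
        rw [mul_assoc, ← mul_assoc t.prod h, ← hct.eq]
        simp [mul_assoc]
      rw [this]
      rcases hsq h (by simp) with h1 | h1 <;>
        rcases ih (fun y hy => hsq y (by simp [hy]))
          (fun y hy z hz => hcomm y (by simp [hy]) z (by simp [hz])) with h2 | h2 <;>
        rw [h1, h2] <;> simp

lemma multiset_map_sum_sum {α β : Type*} [AddCommMonoid β] (g : α → β) :
    ∀ (ms : List (Multiset α)),
      ((ms.sum).map g).sum = (ms.map (fun m => (m.map g).sum)).sum := by
  intro ms
  induction ms with
  | nil => simp
  | cons m ms ih => simp [ih]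

lemma count_sum_zmod2 {α : Type*} [DecidableEq α] (g : α → ZMod 2) :
    ∀ (L : Multiset α) (s : Finset α), (∀ a ∈ L, a ∈ s) →
      (L.map g).sum = ∑ a ∈ s, (L.count a : ZMod 2) * g a := by
  intro L
  induction L using Multiset.induction_on with
  | empty => intro s _; simp
  | cons b L ih =>
      intro s hs
      have hb : b ∈ s := hs b (by simp)
      have hL : ∀ a ∈ L, a ∈ s := fun a ha => hs a (by simp [ha])
      rw [Multiset.map_cons, Multiset.sum_cons, ih s hL]
      have : ∀ a, ((b ::ₘ L).count a : ZMod 2) * g a =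
          (if a = b then g a else 0) + (L.count a : ZMod 2) * g a := by
        intro a
        by_cases hab : a = b
        · subst hab; rw [Multiset.count_cons_self]; push_cast; ring_nf; simp [add_mul]
        · rw [Multiset.count_cons_of_ne hab, if_neg hab, zero_add]
      rw [Finset.sum_congr rfl (fun a _ => this a), Finset.sum_add_distrib,
        Finset.sum_ite_eq' s b (fun a => g a), if_pos hb]

lemma parity_sum_eq {α : Type*} [DecidableEq α] (g : α → ZMod 2) (L L' : Multiset α)
    (hD : ∀ y, Odd (L.count y) ↔ Odd (L'.count y)) :
    (L.map g).sum = (L'.map g).sum := by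
  set s := L.toFinset ∪ L'.toFinset with hs
  rw [count_sum_zmod2 g L s (fun a ha => by simp [hs, Multiset.mem_toFinset, ha]),
    count_sum_zmod2 g L' s (fun a ha => by simp [hs, Multiset.mem_toFinset, ha])]
  refine Finset.sum_congr rfl (fun a _ => ?_)
  have : (L.count a : ZMod 2) = (L'.count a : ZMod 2) := by
    rw [ZMod.natCast_eq_natCast_iff]
    have := hD a
    rw [Nat.odd_iff, Nat.odd_iff] at this
    unfold Nat.ModEq
    omega
  rw [this]

lemma zmod2_add_self (a : ZMod 2) : a + a = 0 := by
  rw [← two_mul, show (2 : ZMod 2) = 0 from rfl, zero_mul]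

lemma dtree_key {n : ℕ} {X : Set (PMat n)} (hX : ∀ P ∈ X, IsPauli P)
    {x : PMat n} {L : Multiset (PMat n)} (t : DTree X x L)
    (g : PMat n → ZMod 2) (hg : ConsistentAssignment X g) :
    PC X x ∧ (x * x = 1 ∨ x * x = -1) ∧ (L.map g).sum = g x := by
  induction t with
  | leaf hx =>
      exact ⟨PC.base hx, pauli_sq (hX _ hx), by simp⟩
  | node cs hc hcomm ih =>
      set l : List (PMat n) := cs.map Prod.fst with hl
      have hpc : ∀ y ∈ l, PC X y := by
        intro y hy
        obtain ⟨p, hp, rfl⟩ := List.mem_map.1 hy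
        exact (ih p hp).1
      have hcl : ∀ y ∈ l, ∀ z ∈ l, Commute y z := by
        intro y hy z hz
        obtain ⟨p, hp, rfl⟩ := List.mem_map.1 hy
        obtain ⟨q, hq, rfl⟩ := List.mem_map.1 hz
        exact hcomm p hp q hq
      have hsql : ∀ y ∈ l, y * y = 1 ∨ y * y = -1 := by
        intro y hy
        obtain ⟨p, hp, rfl⟩ := List.mem_map.1 hy
        exact (ih p hp).2.1
      have hP : PC X l.prod := pc_list_prod l hpc hcl
      have hsq : l.prod * l.prod = 1 ∨ l.prod * l.prod = -1 := sq_list_prod l hsql hcl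
      refine ⟨hP, hsq, ?_⟩
      -- choose a with l.prod * l.prod = (-1)^a
      obtain ⟨a, ha⟩ : ∃ a : ℕ, l.prod * l.prod = (-1 : PMat n) ^ a := by
        rcases hsq with h | h
        · exact ⟨0, by simpa using h⟩
        · exact ⟨1, by simpa using h⟩
      have hcp : ∀ y ∈ l, Commute y l.prod :=
        fun y hy => Commute.list_prod_right _ _ (fun z hz => hcl y hy z hz)
      -- big relation
      have hrel := hg (l ++ [l.prod]) a ?_ ?_ ?_
      · have hpp := hg [l.prod, l.prod] a (by simp [hP])
          (by
            intro y hy z hz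
            simp only [List.mem_cons, List.not_mem_nil, or_false] at hy hz
            rcases hy with hy | hy <;> rcases hz with hz | hz <;> rw [hy, hz])
          (by simpa using ha)
        simp only [List.map_cons, List.map_nil, List.sum_cons, List.sum_nil, add_zero] at hpp
        rw [List.map_append, List.sum_append] at hrel
        simp only [List.map_cons, List.map_nil, List.sum_cons, List.sum_nil, add_zero] at hrel
        have hsum : ((cs.map Prod.snd).sum.map g).sum = (l.map g).sum := by
          rw [multiset_map_sum_sum g]
          congr 1
          rw [hl, List.map_map, List.map_map]
          refine List.map_congr_left (fun p hp => ?_)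
          exact (ih p hp).2.2
        rw [hsum]
        have := hrel.trans hpp.symm
        exact add_right_cancel this
      · intro y hy
        rcases List.mem_append.1 hy with hy | hy
        · exact hpc y hy
        · simp only [List.mem_singleton] at hy; subst hy; exact hP
      · intro y hy z hz
        rcases List.mem_append.1 hy with hy | hy <;>
          rcases List.mem_append.1 hz with hz | hz
        · exact hcl y hy z hz
        · simp only [List.mem_singleton] at hz; subst hz; exact hcp y hy
        · simp only [List.mem_singleton] at hy; subst hy; exact (hcp z hz).symm
        · simp only [List.mem_singleton] at hy hz; subst hy; subst hz; exact Commute.refl _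
      · rw [List.prod_append]; simpa using ha

set_option maxHeartbeats 1000000 in
/-- If a set `X` of Pauli operators admits determining trees for `x` and for `-x`
with equal determining sets (leaves of odd multiplicity), then `X` is
state-independently AvN in a partial closure: no global assignment on the partial
closure is consistent with all commuting-product relations. -/
theorem equal_determining_sets_implies_state_independent_avn
    {n : ℕ} (X : Set (PMat n)) (hX : ∀ P ∈ X, IsPauli P)
    (x : PMat n) (L L' : Multiset (PMat n))
    (t1 : DTree X x L) (t2 : DTree X (-x) L')
    (hD : ∀ y : PMat n, Odd (L.count y) ↔ Odd (L'.count y)) :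
    ¬ ∃ g : PMat n → ZMod 2, ConsistentAssignment X g := by
  rintro ⟨g, hg⟩
  obtain ⟨hpc1, hsq1, hsum1⟩ := dtree_key hX t1 g hg
  obtain ⟨hpc2, _, hsum2⟩ := dtree_key hX t2 g hg
  have heq : g x = g (-x) := by
    rw [← hsum1, ← hsum2]
    exact parity_sum_eq g L L' hD
  rcases hsq1 with hs | hs
  · -- x * -x = -1 = (-1)^1
    have hrel := hg [x, -x] 1 (by
        intro y hy
        simp only [List.mem_cons, List.not_mem_nil, or_false] at hy
        rcases hy with rfl | rfl
        · exact hpc1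
        · exact hpc2)
      (by
        intro y hy z hz
        simp only [List.mem_cons, List.not_mem_nil, or_false] at hy hz
        rcases hy with hy | hy <;> rcases hz with hz | hz <;> rw [hy, hz] <;>
          first
            | exact Commute.refl _
            | exact (Commute.refl x).neg_right
            | exact (Commute.refl x).neg_left)
      (by simp [hs])
    simp only [List.map_cons, List.map_nil, List.sum_cons, List.sum_nil, add_zero] at hrel
    rw [← heq, zmod2_add_self] at hrel
    exact absurd hrel.symm (by decide)
  · -- x * x = -1 = (-1)^1
    have hrel := hg [x, x] 1 (by
        intro y hy
        simp only [List.mem_cons, List.not_mem_nil, or_false] at hy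
        rcases hy with rfl | rfl <;> exact hpc1)
      (by
        intro y hy z hz
        simp only [List.mem_cons, List.not_mem_nil, or_false] at hy hz
        rcases hy with hy | hy <;> rcases hz with hz | hz <;> rw [hy, hz])
      (by simp [hs])
    simp only [List.map_cons, List.map_nil, List.sum_cons, List.sum_nil, add_zero] at hrel
    rw [zmod2_add_self] at hrel
    exact absurd hrel.symm (by decide)
end
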